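/- (Proposition 2, Reformulation of the finite-buffer hypercube model.) Fix a buffer capacity C ≥ 1. Let (p_n)_{n=0}^{N} be a solution of the conditional probability formulation with p_n(m) ≥ 0 for all n and m ∈ C_n, and suppose λ(n) > 0 for 0 ≤ n ≤ N−1 and μ(n) > 0 for 1 ≤ n ≤ N; extend λ(n) := λ for N ≤ n ≤ N+C−1. Define G(n) = ∏_{s=1}^{n} λ(s−1)/μ(s) for 1 ≤ n ≤ N, G(n) = (∏_{s=0}^{n−1} λ(s))/(μ(1)⋯μ(N−1)·μ(N)^{n−N+1}) for N+1 ≤ n ≤ N+C, and p(0) = (1 + Σ_{n=1}^{N+C} G(n))^{−1}, p(n) = G(n)·p(0). Then P(m) := p(w(m))·p_{w(m)}(m) and P̃(c) := p(N+c), c = 1,…,C, satisfy the finite-buffer balance equations, including the normalization Σ_m P(m) + Σ_{c=1}^{C} P̃(c) = 1. -/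

import Mathlib

open Finset Filter

/-- Number of busy units in state `B`. -/
def wt {N : ℕ} (B : Fin N → Bool) : ℕ := (Finset.univ.filter fun i => B i = true).card

/-- The layer `C_n`: states with exactly `n` busy units. -/
def layer (N n : ℕ) : Finset (Fin N → Bool) := Finset.univ.filter fun B => wt B = n

/-- The full state: all units busy. -/
def fullState (N : ℕ) : Fin N → Bool := fun _ => true

/-- Unit `i` is the most preferred free unit at node `j` in state `l`
(ranks are given by the permutation `ζ j`). -/
def dispatched {N J : ℕ} (ζ : Fin J → (Fin N ≃ Fin N)) (l : Fin N → Bool) (j : Fin J)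
    (i : Fin N) : Prop :=
  l i = false ∧ ∀ h : Fin N, (h : ℕ) < ((ζ j).symm i : ℕ) → l ((ζ j) h) = true

instance {N J : ℕ} (ζ : Fin J → (Fin N ≃ Fin N)) (l : Fin N → Bool) (j : Fin J) (i : Fin N) :
    Decidable (dispatched ζ l j i) := by
  unfold dispatched; infer_instance

/-- Upward transition rate `λ_{lm}`: nonzero only if `m` arises from `l` by flipping
one coordinate `i` from free to busy, in which case it is `λ` times the total demand
fraction of the nodes dispatching unit `i` in state `l`. -/
noncomputable def upRate {N J : ℕ} (lam : ℝ) (f : Fin J → ℝ) (ζ : Fin J → (Fin N ≃ Fin N))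
    (l m : Fin N → Bool) : ℝ :=
  ∑ i : Fin N,
    if l i = false ∧ m = Function.update l i true then
      lam * ∑ j : Fin J, if dispatched ζ l j i then f j else 0
    else 0

/-- Downward transition rate `μ_{lm}`: nonzero only if `m` arises from `l` by flipping
one coordinate `i` from busy to free, in which case it is `ν i`. -/
noncomputable def downRate {N : ℕ} (ν : Fin N → ℝ) (l m : Fin N → Bool) : ℝ :=
  ∑ i : Fin N, if l i = true ∧ m = Function.update l i false then ν i else 0

/-- Total upward rate `λ_m = Σ_l λ_{ml}` out of state `m`. -/
noncomputable def totalUp {N J : ℕ} (lam : ℝ) (f : Fin J → ℝ) (ζ : Fin J → (Fin N ≃ Fin N))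
    (m : Fin N → Bool) : ℝ :=
  ∑ l : Fin N → Bool, upRate lam f ζ m l

/-- Total service completion rate `μ_m = Σ_{i busy} ν i` out of state `m`. -/
noncomputable def totalDown {N : ℕ} (ν : Fin N → ℝ) (m : Fin N → Bool) : ℝ :=
  ∑ i : Fin N, if m i = true then ν i else 0

/-- `C^m_n`: the states of layer `n` at Hamming distance 1 from `m`. -/
def adjLayer {N : ℕ} (n : ℕ) (m : Fin N → Bool) : Finset (Fin N → Bool) :=
  (layer N n).filter fun l => (Finset.univ.filter fun i => l i ≠ m i).card = 1

/-- `λ(n) = Σ_{m ∈ C_n} p_n(m) · λ_m`. -/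
noncomputable def layerLamOf {N J : ℕ} (lam : ℝ) (f : Fin J → ℝ) (ζ : Fin J → (Fin N ≃ Fin N))
    (p : ℕ → (Fin N → Bool) → ℝ) (n : ℕ) : ℝ :=
  ∑ m ∈ layer N n, p n m * totalUp lam f ζ m

/-- `μ(n) = Σ_{m ∈ C_n} p_n(m) · μ_m`. -/
noncomputable def layerMuOf {N : ℕ} (ν : Fin N → ℝ) (p : ℕ → (Fin N → Bool) → ℝ) (n : ℕ) : ℝ :=
  ∑ m ∈ layer N n, p n m * totalDown ν m

/-- The conditional probability formulation of the hypercube model. -/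
def IsCondSolution {N J : ℕ} (lam : ℝ) (f : Fin J → ℝ) (ζ : Fin J → (Fin N ≃ Fin N))
    (ν : Fin N → ℝ) (p : ℕ → (Fin N → Bool) → ℝ) : Prop :=
  (∀ m ∈ layer N 0, p 0 m = 1) ∧
  (∀ m ∈ layer N N, p N m = 1) ∧
  (∀ n, 1 ≤ n → n ≤ N - 1 → ∀ m ∈ layer N n,
    p n m =
      (∑ l ∈ layer N (n - 1),
        p (n - 1) l * (layerMuOf ν p n / layerLamOf lam f ζ p (n - 1)) *
          (upRate lam f ζ l m / (totalUp lam f ζ m + totalDown ν m))) +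
      (∑ l ∈ adjLayer (n + 1) m,
        p (n + 1) l * (layerLamOf lam f ζ p n / layerMuOf ν p (n + 1)) *
          (downRate ν l m / (totalUp lam f ζ m + totalDown ν m)))) ∧
  (∀ n ≤ N, ∑ m ∈ layer N n, p n m = 1)

/-- The extended arrival rates: `λ(n)` as in the conditional formulation for `n ≤ N-1`,
and `λ(n) = λ` for `n ≥ N`. -/
noncomputable def lamExt {N J : ℕ} (lam : ℝ) (f : Fin J → ℝ) (ζ : Fin J → (Fin N ≃ Fin N))
    (p : ℕ → (Fin N → Bool) → ℝ) (n : ℕ) : ℝ :=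
  if n ≤ N - 1 then layerLamOf lam f ζ p n else lam

/-- The birth-death coefficients `G(n)` of the finite-buffer system. -/
noncomputable def Gfb {N J : ℕ} (lam : ℝ) (f : Fin J → ℝ) (ζ : Fin J → (Fin N ≃ Fin N))
    (ν : Fin N → ℝ) (p : ℕ → (Fin N → Bool) → ℝ) (n : ℕ) : ℝ :=
  if n ≤ N then ∏ s ∈ Finset.Icc 1 n, lamExt lam f ζ p (s - 1) / layerMuOf ν p s
  else (∏ s ∈ Finset.range n, lamExt lam f ζ p s) /
    ((∏ s ∈ Finset.Icc 1 (N - 1), layerMuOf ν p s) * layerMuOf ν p N ^ (n - N + 1))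

/-- The finite-buffer balance equations (buffer capacity `C ≥ 1`), with normalization.
`Pq c` is the probability `P̃(c)` of `c` waiting calls; the convention `P̃(0) = P(full)`
is used in the queue recursions. -/
def SatisfiesFBBalance {N J : ℕ} (lam : ℝ) (f : Fin J → ℝ) (ζ : Fin J → (Fin N ≃ Fin N))
    (ν : Fin N → ℝ) (C : ℕ) (P : (Fin N → Bool) → ℝ) (Pq : ℕ → ℝ) : Prop :=
  (∀ m : Fin N → Bool, m ≠ fullState N →
    P m * (totalUp lam f ζ m + totalDown ν m) =
      (∑ l : Fin N → Bool, P l * upRate lam f ζ l m) +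
      (∑ l : Fin N → Bool, P l * downRate ν l m)) ∧
  (P (fullState N) * (lam + ∑ i, ν i) =
      (∑ l ∈ layer N (N - 1), P l * lam) + Pq 1 * ∑ i, ν i) ∧
  (∀ c, 1 ≤ c → c ≤ C - 1 →
      Pq c * (lam + ∑ i, ν i) =
        (if c = 1 then P (fullState N) else Pq (c - 1)) * lam + Pq (c + 1) * ∑ i, ν i) ∧
  (Pq C * (∑ i, ν i) = (if C = 1 then P (fullState N) else Pq (C - 1)) * lam) ∧
  ((∑ m : Fin N → Bool, P m) + (∑ c ∈ Finset.Icc 1 C, Pq c) = 1)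


section Aux

variable {N J : ℕ}

lemma mem_layer {n : ℕ} {B : Fin N → Bool} : B ∈ layer N n ↔ wt B = n := by
  simp [layer]

lemma wt_le (B : Fin N → Bool) : wt B ≤ N := by
  classical
  simpa [wt] using Finset.card_filter_le Finset.univ (fun i => B i = true)

lemma wt_full : wt (fullState N) = N := by
  simp [wt, fullState]

lemma wt_eq_N_iff (B : Fin N → Bool) : wt B = N ↔ B = fullState N := by
  constructor
  · intro h
    funext i
    have hsub : (Finset.univ.filter fun i => B i = true) = Finset.univ := by
      apply Finset.eq_univ_of_card
      simpa [wt] using h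
    have : i ∈ Finset.univ.filter fun i => B i = true := by
      rw [hsub]; exact Finset.mem_univ i
    simpa [fullState] using (Finset.mem_filter.mp this).2
  · rintro rfl; exact wt_full

lemma wt_eq_zero_iff (B : Fin N → Bool) : wt B = 0 ↔ B = fun _ => false := by
  constructor
  · intro h
    funext i
    by_contra hi
    have hb : B i = true := by cases hB : B i <;> simp_all
    have : i ∈ Finset.univ.filter fun i => B i = true := by simp [hb]
    have hpos := Finset.card_pos.mpr ⟨i, this⟩
    simp only [wt] at h
    omega
  · rintro rfl; simp [wt]

lemma wt_update_true (l : Fin N → Bool) (i : Fin N) (h : l i = false) :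
    wt (Function.update l i true) = wt l + 1 := by
  classical
  have hset : (Finset.univ.filter fun k => Function.update l i true k = true)
      = insert i (Finset.univ.filter fun k => l k = true) := by
    ext k
    by_cases hk : k = i <;> simp [Function.update_apply, hk]
  have hi : i ∉ Finset.univ.filter fun k => l k = true := by simp [h]
  simp [wt, hset, Finset.card_insert_of_notMem hi]

lemma wt_update_false (l : Fin N → Bool) (i : Fin N) (h : l i = true) :
    wt l = wt (Function.update l i false) + 1 := by
  have h2 : (Function.update l i false) i = false := by simp
  have := wt_update_true (Function.update l i false) i h2
  have hl : Function.update (Function.update l i false) i true = l := by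
    funext k
    by_cases hk : k = i <;> simp [Function.update_apply, hk, h]
  rw [hl] at this
  omega

end Aux
section Aux2

variable {N J : ℕ}

lemma existsUnique_dispatched (ζ : Fin J → (Fin N ≃ Fin N)) (m : Fin N → Bool)
    (hm : m ≠ fullState N) (j : Fin J) : ∃! i, dispatched ζ m j i := by
  classical
  have hex : ∃ i, m i = false := by
    by_contra h
    push_neg at h
    exact hm (funext fun i => by
      have := h i
      cases hmi : m i <;> simp_all [fullState])
  obtain ⟨i0, hi0⟩ := hex
  set T : Finset (Fin N) := Finset.univ.filter fun h : Fin N => m ((ζ j) h) = false with hT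
  have hne : T.Nonempty := ⟨(ζ j).symm i0, by simp [hT, hi0]⟩
  set h0 := T.min' hne with hh0
  have hmem : m ((ζ j) h0) = false := by
    have := T.min'_mem hne
    simpa [hT] using this
  refine ⟨(ζ j) h0, ⟨hmem, ?_⟩, ?_⟩
  · intro h hlt
    rw [Equiv.symm_apply_apply] at hlt
    by_contra hcon
    have hfalse : m ((ζ j) h) = false := by cases hmh : m ((ζ j) h) <;> simp_all
    have : h ∈ T := by simp [hT, hfalse]
    have := T.min'_le h this
    have : (h0 : ℕ) ≤ (h : ℕ) := this
    omega
  · rintro i' ⟨h1', h2'⟩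
    set r := (ζ j).symm i' with hr
    have hrT : r ∈ T := by simp [hT, hr, h1']
    have hle : h0 ≤ r := T.min'_le r hrT
    have heq : h0 = r := by
      rcases eq_or_lt_of_le hle with h | h
      · exact h
      · exfalso
        have := h2' h0 (by exact_mod_cast h)
        rw [this] at hmem
        exact absurd hmem (by simp)
    have : (ζ j) r = i' := by simp [hr]
    rw [heq, this]

lemma totalUp_eq {lam : ℝ} {f : Fin J → ℝ} (hfsum : ∑ j, f j = 1)
    (ζ : Fin J → (Fin N ≃ Fin N)) {m : Fin N → Bool} (hm : m ≠ fullState N) :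
    totalUp lam f ζ m = lam := by
  classical
  have h1 : totalUp lam f ζ m
      = ∑ i : Fin N, lam * ∑ j : Fin J, if dispatched ζ m j i then f j else 0 := by
    rw [totalUp]
    simp only [upRate]
    rw [Finset.sum_comm]
    refine Finset.sum_congr rfl fun i _ => ?_
    by_cases hmi : m i = false
    · simp [hmi]
    · have hmi' : m i = true := by cases h : m i <;> simp_all
      have hnd : ∀ j, ¬ dispatched ζ m j i := fun j hd => by
        have := hd.1; simp [hmi'] at this
      simp [hmi, hnd]
  rw [h1, ← Finset.mul_sum, Finset.sum_comm]
  have h2 : ∀ j : Fin J, (∑ i : Fin N, if dispatched ζ m j i then f j else 0) = f j := by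
    intro j
    obtain ⟨i0, hd, hu⟩ := existsUnique_dispatched ζ m hm j
    rw [Finset.sum_eq_single i0]
    · simp [hd]
    · intro b _ hb
      simp only [ite_eq_right_iff]
      intro hdb; exact absurd (hu b hdb) hb
    · simp
  rw [Finset.sum_congr rfl fun j _ => h2 j, hfsum, mul_one]

lemma totalUp_full {lam : ℝ} {f : Fin J → ℝ} (ζ : Fin J → (Fin N ≃ Fin N)) :
    totalUp lam f ζ (fullState N) = 0 := by
  simp [totalUp, upRate, fullState]

end Aux2
section Aux3

variable {N J : ℕ} {lam : ℝ} {f : Fin J → ℝ} {ν : Fin N → ℝ} {ζ : Fin J → (Fin N ≃ Fin N)}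
  {p : ℕ → (Fin N → Bool) → ℝ}

lemma layer_N_eq : layer N N = {fullState N} := by
  ext B
  simp [mem_layer, wt_eq_N_iff]

lemma totalDown_full : totalDown ν (fullState N) = ∑ i, ν i := by
  simp [totalDown, fullState]

lemma totalDown_nonneg (hν : ∀ i, 0 < ν i) (m : Fin N → Bool) : 0 ≤ totalDown ν m := by
  refine Finset.sum_nonneg fun i _ => ?_
  by_cases h : m i = true <;> simp [h, (hν i).le]

lemma layerLam_eq (hfsum : ∑ j, f j = 1) {n : ℕ} (hn : n < N)
    (hnorm : ∑ m ∈ layer N n, p n m = 1) :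
    layerLamOf lam f ζ p n = lam := by
  unfold layerLamOf
  have : ∀ m ∈ layer N n, p n m * totalUp lam f ζ m = p n m * lam := by
    intro m hm
    have hwm : wt m = n := mem_layer.mp hm
    have hmf : m ≠ fullState N := by
      intro h; rw [h, wt_full] at hwm; omega
    rw [totalUp_eq hfsum ζ hmf]
  rw [Finset.sum_congr rfl this, ← Finset.sum_mul, hnorm, one_mul]

lemma layerMu_N (hfull : p N (fullState N) = 1) :
    layerMuOf ν p N = ∑ i, ν i := by
  unfold layerMuOf
  rw [layer_N_eq, Finset.sum_singleton, hfull, one_mul, totalDown_full]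

lemma lamExt_eq (hfsum : ∑ j, f j = 1) (hN : 1 ≤ N)
    (hnorm : ∀ n ≤ N, ∑ m ∈ layer N n, p n m = 1) (n : ℕ) :
    lamExt lam f ζ p n = lam := by
  unfold lamExt
  by_cases h : n ≤ N - 1
  · rw [if_pos h]
    exact layerLam_eq hfsum (by omega) (hnorm n (by omega))
  · rw [if_neg h]

/-- The denominator of the closed form of `Gfb`. -/
noncomputable def Dfb {N : ℕ} (ν : Fin N → ℝ) (p : ℕ → (Fin N → Bool) → ℝ) (n : ℕ) : ℝ :=
  (∏ s ∈ Finset.Icc 1 (min n N), layerMuOf ν p s) * layerMuOf ν p N ^ (n - N)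

lemma Dfb_pos (hN : 1 ≤ N) (hmuPos : ∀ n, 1 ≤ n → n ≤ N → 0 < layerMuOf ν p n) (n : ℕ) :
    (0:ℝ) < Dfb ν p n := by
  unfold Dfb
  apply mul_pos
  · refine Finset.prod_pos fun s hs => ?_
    rw [Finset.mem_Icc] at hs
    exact hmuPos s hs.1 (by omega)
  · exact pow_pos (hmuPos N hN le_rfl) _

lemma Dfb_succ (hN : 1 ≤ N) {n : ℕ} (hn : 1 ≤ n) :
    Dfb ν p n = Dfb ν p (n-1) * layerMuOf ν p (min n N) := by
  unfold Dfb
  by_cases h : n ≤ N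
  · rw [min_eq_left h, min_eq_left (by omega : n - 1 ≤ N)]
    have h0 : n - N = 0 := by omega
    have h0' : n - 1 - N = 0 := by omega
    simp only [h0, h0', pow_zero, mul_one]
    have hn' : n = (n-1) + 1 := by omega
    rw [hn', Finset.prod_Icc_succ_top (by omega : 1 ≤ n - 1 + 1)]
    simp
  · rw [min_eq_right (by omega : N ≤ n), min_eq_right (by omega : N ≤ n - 1)]
    have : n - N = (n - 1 - N) + 1 := by omega
    rw [this, pow_succ]
    ring

lemma Gfb_closed (hN : 1 ≤ N) (hlamext : ∀ k, lamExt lam f ζ p k = lam) (n : ℕ) :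
    Gfb lam f ζ ν p n = lam ^ n / Dfb ν p n := by
  unfold Gfb Dfb
  by_cases h : n ≤ N
  · rw [if_pos h, min_eq_left h]
    have h0 : n - N = 0 := by omega
    rw [h0, pow_zero, mul_one, Finset.prod_div_distrib]
    congr 1
    rw [Finset.prod_congr rfl fun s _ => hlamext (s-1), Finset.prod_const]
    congr 1
    simp [Nat.card_Icc]
  · rw [if_neg h, min_eq_right (by omega : N ≤ n)]
    have hnum : (∏ s ∈ Finset.range n, lamExt lam f ζ p s) = lam ^ n := by
      rw [Finset.prod_congr rfl fun s _ => hlamext s, Finset.prod_const, Finset.card_range]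
    rw [hnum]
    congr 1
    have hIcc : Finset.Icc 1 N = insert N (Finset.Icc 1 (N-1)) := by
      ext x
      simp only [Finset.mem_Icc, Finset.mem_insert]
      omega
    rw [hIcc, Finset.prod_insert (by simp [Finset.mem_Icc]; omega)]
    have : n - N + 1 = (n - N) + 1 := rfl
    rw [this, pow_succ]
    ring

lemma Gfb_pos (hN : 1 ≤ N) (hlam : 0 < lam) (hlamext : ∀ k, lamExt lam f ζ p k = lam)
    (hmuPos : ∀ n, 1 ≤ n → n ≤ N → 0 < layerMuOf ν p n) (n : ℕ) :
    0 < Gfb lam f ζ ν p n := by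
  rw [Gfb_closed hN hlamext]
  exact div_pos (pow_pos hlam n) (Dfb_pos hN hmuPos n)

lemma Gfb_zero (hN : 1 ≤ N) (hlamext : ∀ k, lamExt lam f ζ p k = lam) :
    Gfb lam f ζ ν p 0 = 1 := by
  unfold Gfb
  simp

lemma Gfb_rec (hN : 1 ≤ N) (hlam : 0 < lam) (hlamext : ∀ k, lamExt lam f ζ p k = lam)
    (hmuPos : ∀ n, 1 ≤ n → n ≤ N → 0 < layerMuOf ν p n) {n : ℕ} (hn : 1 ≤ n) :
    Gfb lam f ζ ν p n * layerMuOf ν p (min n N) = Gfb lam f ζ ν p (n-1) * lam := by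
  rw [Gfb_closed hN hlamext, Gfb_closed hN hlamext]
  rw [Dfb_succ hN hn]
  have hD : Dfb ν p (n-1) ≠ 0 := (Dfb_pos hN hmuPos _).ne'
  have hμ : layerMuOf ν p (min n N) ≠ 0 := by
    refine (hmuPos _ ?_ ?_).ne' <;> omega
  have hpow : lam ^ (n-1) * lam = lam ^ n := by
    rw [← pow_succ]
    congr 1
    omega
  field_simp
  rw [← hpow]

end Aux3
section Aux4

variable {N J : ℕ} {lam : ℝ} {f : Fin J → ℝ} {ν : Fin N → ℝ} {ζ : Fin J → (Fin N ≃ Fin N)}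

lemma upRate_eq_zero {l m : Fin N → Bool} (h : wt l + 1 ≠ wt m) :
    upRate lam f ζ l m = 0 := by
  refine Finset.sum_eq_zero fun i _ => ?_
  rw [if_neg]
  rintro ⟨h1, rfl⟩
  exact h (wt_update_true l i h1).symm

lemma downRate_mem_adj {l m : Fin N → Bool} (h : downRate ν l m ≠ 0) :
    l ∈ adjLayer (wt m + 1) m := by
  classical
  have hex : ∃ i, l i = true ∧ m = Function.update l i false := by
    by_contra hc
    push_neg at hc
    apply h
    refine Finset.sum_eq_zero fun i _ => ?_
    rw [if_neg]
    rintro ⟨h1, h2⟩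
    exact (hc i h1) h2
  obtain ⟨i, hi, hmi⟩ := hex
  have hwt : wt l = wt m + 1 := by
    rw [hmi]; exact wt_update_false l i hi
  have hdist : (Finset.univ.filter fun k => l k ≠ m k) = {i} := by
    ext k
    by_cases hk : k = i
    · subst hk
      simp [hmi, hi]
    · simp [hmi, Function.update_apply, hk]
  rw [adjLayer, Finset.mem_filter]
  exact ⟨mem_layer.mpr hwt, by rw [hdist]; simp⟩

lemma sum_upRate_restrict (P : (Fin N → Bool) → ℝ) {m : Fin N → Bool} {n : ℕ}
    (hm : wt m = n) (hn : 1 ≤ n) :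
    (∑ l : Fin N → Bool, P l * upRate lam f ζ l m)
      = ∑ l ∈ layer N (n - 1), P l * upRate lam f ζ l m := by
  refine (Finset.sum_subset (Finset.subset_univ _) fun l _ hl => ?_).symm
  have : wt l + 1 ≠ wt m := by
    intro hcon
    exact hl (mem_layer.mpr (by omega))
  rw [upRate_eq_zero this, mul_zero]

lemma sum_downRate_restrict (P : (Fin N → Bool) → ℝ) (m : Fin N → Bool) :
    (∑ l : Fin N → Bool, P l * downRate ν l m)
      = ∑ l ∈ adjLayer (wt m + 1) m, P l * downRate ν l m := by
  refine (Finset.sum_subset (Finset.subset_univ _) fun l _ hl => ?_).symm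
  by_cases h : downRate ν l m = 0
  · rw [h, mul_zero]
  · exact absurd (downRate_mem_adj h) hl

lemma wt_one_unique {l : Fin N → Bool} {i : Fin N} (h1 : wt l = 1) (hi : l i = true)
    {k : Fin N} (hk : k ≠ i) : l k = false := by
  obtain ⟨a, ha⟩ := Finset.card_eq_one.mp h1
  have hia : i ∈ (Finset.univ.filter fun x => l x = true) := by simp [hi]
  rw [ha, Finset.mem_singleton] at hia
  by_contra hc
  have hkt : l k = true := by cases h : l k <;> simp_all
  have hka : k ∈ (Finset.univ.filter fun x => l x = true) := by simp [hkt]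
  rw [ha, Finset.mem_singleton] at hka
  exact hk (by rw [hka, ← hia])

lemma downRate_to_zero {l : Fin N → Bool} (hl : wt l = 1) :
    downRate ν l (fun _ => false) = totalDown ν l := by
  unfold downRate totalDown
  refine Finset.sum_congr rfl fun i _ => ?_
  by_cases hi : l i = true
  · rw [if_pos, if_pos hi]
    refine ⟨hi, ?_⟩
    funext k
    by_cases hk : k = i
    · subst hk; simp
    · rw [Function.update_apply, if_neg hk]
      exact (wt_one_unique hl hi hk).symm
  · rw [if_neg, if_neg hi]
    rintro ⟨h1, _⟩
    exact hi h1

lemma adjLayer_one_zero : adjLayer 1 (fun _ => false : Fin N → Bool) = layer N 1 := by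
  ext l
  rw [adjLayer, Finset.mem_filter]
  constructor
  · exact fun h => h.1
  · intro h
    refine ⟨h, ?_⟩
    have : (Finset.univ.filter fun i => l i ≠ (fun _ => false : Fin N → Bool) i)
        = Finset.univ.filter fun i => l i = true := by
      ext i
      simp
    rw [this]
    exact mem_layer.mp h

end Aux4

/-- Proposition 2 (reformulation of the finite-buffer hypercube model). -/
theorem hypercube_finite_buffer_reformulation
    {N J : ℕ} (hN : 2 ≤ N) (hJ : 1 ≤ J)
    (lam : ℝ) (hlam : 0 < lam)
    (f : Fin J → ℝ) (hf : ∀ j, 0 ≤ f j) (hfsum : ∑ j, f j = 1)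
    (ν : Fin N → ℝ) (hν : ∀ i, 0 < ν i)
    (ζ : Fin J → (Fin N ≃ Fin N))
    (C : ℕ) (hC : 1 ≤ C)
    (p : ℕ → (Fin N → Bool) → ℝ)
    (hsol : IsCondSolution lam f ζ ν p)
    (hnonneg : ∀ n ≤ N, ∀ m ∈ layer N n, 0 ≤ p n m)
    (hlamPos : ∀ n ≤ N - 1, 0 < layerLamOf lam f ζ p n)
    (hmuPos : ∀ n, 1 ≤ n → n ≤ N → 0 < layerMuOf ν p n) :
    SatisfiesFBBalance lam f ζ ν C
      (fun m =>
        Gfb lam f ζ ν p (wt m) *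
          (1 + ∑ n ∈ Finset.Icc 1 (N + C), Gfb lam f ζ ν p n)⁻¹ * p (wt m) m)
      (fun c =>
        Gfb lam f ζ ν p (N + c) *
          (1 + ∑ n ∈ Finset.Icc 1 (N + C), Gfb lam f ζ ν p n)⁻¹) := by
  classical
  obtain ⟨h0, hNfull, hbal, hnorm⟩ := hsol
  have hN1 : 1 ≤ N := by omega
  have hlamext : ∀ k, lamExt lam f ζ p k = lam := lamExt_eq hfsum hN1 hnorm
  have hGpos : ∀ n, 0 < Gfb lam f ζ ν p n := Gfb_pos hN1 hlam hlamext hmuPos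
  set S : ℝ := 1 + ∑ n ∈ Finset.Icc 1 (N + C), Gfb lam f ζ ν p n with hS
  have hSpos : 0 < S := by
    rw [hS]
    have : 0 ≤ ∑ n ∈ Finset.Icc 1 (N + C), Gfb lam f ζ ν p n :=
      Finset.sum_nonneg fun n _ => (hGpos n).le
    linarith
  have hpfull : p N (fullState N) = 1 := hNfull _ (by simp [mem_layer, wt_full])
  have hmuN : layerMuOf ν p N = ∑ i, ν i := layerMu_N hpfull
  have hrec : ∀ n, 1 ≤ n →
      Gfb lam f ζ ν p n * layerMuOf ν p (min n N) = Gfb lam f ζ ν p (n-1) * lam :=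
    fun n hn => Gfb_rec hN1 hlam hlamext hmuPos hn
  have hrecQ : ∀ c, 1 ≤ c →
      Gfb lam f ζ ν p (N + c) * (∑ i, ν i) = Gfb lam f ζ ν p (N + c - 1) * lam := by
    intro c hc
    have := hrec (N + c) (by omega)
    rwa [min_eq_right (by omega : N ≤ N + c), hmuN] at this
  refine ⟨?_, ?_, ?_, ?_, ?_⟩
  · -- internal balance equations
    intro m hm
    dsimp only
    rcases Nat.eq_zero_or_pos (wt m) with hm0 | hpos
    · -- empty state
      have hmz : m = fun _ => false := (wt_eq_zero_iff m).mp hm0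
      have hupz : (∑ l : Fin N → Bool,
          Gfb lam f ζ ν p (wt l) * S⁻¹ * p (wt l) l * upRate lam f ζ l m) = 0 :=
        Finset.sum_eq_zero fun l _ => by
          rw [upRate_eq_zero (by rw [hm0]; omega), mul_zero]
      have hdz : (∑ l : Fin N → Bool,
          Gfb lam f ζ ν p (wt l) * S⁻¹ * p (wt l) l * downRate ν l m)
          = Gfb lam f ζ ν p 1 * S⁻¹ * layerMuOf ν p 1 := by
        rw [sum_downRate_restrict _ m, hm0, hmz, zero_add, adjLayer_one_zero]
        have hterm : ∀ l ∈ layer N 1,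
            Gfb lam f ζ ν p (wt l) * S⁻¹ * p (wt l) l * downRate ν l (fun _ => false)
              = (Gfb lam f ζ ν p 1 * S⁻¹) * (p 1 l * totalDown ν l) := fun l hl => by
          rw [downRate_to_zero (mem_layer.mp hl), mem_layer.mp hl]; ring
        rw [Finset.sum_congr rfl hterm, ← Finset.mul_sum, layerMuOf]
      have hTD : totalDown ν m = 0 := by
        rw [hmz]
        simp [totalDown]
      rw [hupz, hdz, hm0, totalUp_eq hfsum ζ hm, hTD, h0 m (mem_layer.mpr hm0)]
      have e := hrec 1 le_rfl
      rw [min_eq_left hN1] at e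
      norm_num at e
      linear_combination (-(S⁻¹)) * e
    · -- internal state
      have hwle := wt_le m
      have hne : wt m ≠ N := fun h => hm ((wt_eq_N_iff m).mp h)
      set n := wt m with hn
      have hn1 : 1 ≤ n := hpos
      have hn2 : n ≤ N - 1 := by omega
      have hmmem : m ∈ layer N n := mem_layer.mpr hn.symm
      have hTU : totalUp lam f ζ m = lam := totalUp_eq hfsum ζ hm
      have hE := hbal n hn1 hn2 m hmmem
      rw [layerLam_eq hfsum (by omega) (hnorm _ (by omega)),
          layerLam_eq hfsum (by omega) (hnorm _ (by omega))] at hE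
      set A := totalUp lam f ζ m + totalDown ν m with hA
      have hAne : A ≠ 0 := by
        have h1 := totalDown_nonneg hν m
        have : 0 < A := by rw [hA, hTU]; linarith
        exact this.ne'
      have hμ1 : layerMuOf ν p (n+1) ≠ 0 := (hmuPos (n+1) (by omega) (by omega)).ne'
      have e1 := hrec n hn1
      rw [min_eq_left (by omega)] at e1
      have e2 := hrec (n+1) (by omega)
      rw [min_eq_left (by omega), Nat.add_sub_cancel] at e2
      have c1 : Gfb lam f ζ ν p n * (layerMuOf ν p n / lam) = Gfb lam f ζ ν p (n-1) := by
        rw [← mul_div_assoc, div_eq_iff hlam.ne']; exact e1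
      have c2 : Gfb lam f ζ ν p n * (lam / layerMuOf ν p (n+1)) = Gfb lam f ζ ν p (n+1) := by
        rw [← mul_div_assoc, div_eq_iff hμ1]; exact e2.symm
      rw [sum_upRate_restrict _ hn.symm hn1, sum_downRate_restrict _ m, ← hn]
      have hup' : (∑ l ∈ layer N (n-1),
          Gfb lam f ζ ν p (wt l) * S⁻¹ * p (wt l) l * upRate lam f ζ l m)
          = ∑ l ∈ layer N (n-1),
              Gfb lam f ζ ν p (n-1) * S⁻¹ * (p (n-1) l * upRate lam f ζ l m) :=
        Finset.sum_congr rfl fun l hl => by rw [mem_layer.mp hl]; ring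
      have hdown' : (∑ l ∈ adjLayer (n+1) m,
          Gfb lam f ζ ν p (wt l) * S⁻¹ * p (wt l) l * downRate ν l m)
          = ∑ l ∈ adjLayer (n+1) m,
              Gfb lam f ζ ν p (n+1) * S⁻¹ * (p (n+1) l * downRate ν l m) :=
        Finset.sum_congr rfl fun l hl => by
          rw [mem_layer.mp (Finset.mem_filter.mp hl).1]; ring
      rw [hup', hdown', hE]
      have hS1 : Gfb lam f ζ ν p n * S⁻¹ *
          (∑ l ∈ layer N (n-1),
            p (n-1) l * (layerMuOf ν p n / lam) * (upRate lam f ζ l m / A)) * A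
          = ∑ l ∈ layer N (n-1),
              Gfb lam f ζ ν p (n-1) * S⁻¹ * (p (n-1) l * upRate lam f ζ l m) := by
        rw [mul_right_comm, Finset.mul_sum]
        refine Finset.sum_congr rfl fun l hl => ?_
        calc Gfb lam f ζ ν p n * S⁻¹ * A *
              (p (n-1) l * (layerMuOf ν p n / lam) * (upRate lam f ζ l m / A))
            = Gfb lam f ζ ν p n * (layerMuOf ν p n / lam) * S⁻¹ *
              (p (n-1) l * (upRate lam f ζ l m / A * A)) := by ring
          _ = Gfb lam f ζ ν p (n-1) * S⁻¹ * (p (n-1) l * upRate lam f ζ l m) := by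
              rw [div_mul_cancel₀ _ hAne, c1]
      have hS2 : Gfb lam f ζ ν p n * S⁻¹ *
          (∑ l ∈ adjLayer (n+1) m,
            p (n+1) l * (lam / layerMuOf ν p (n+1)) * (downRate ν l m / A)) * A
          = ∑ l ∈ adjLayer (n+1) m,
              Gfb lam f ζ ν p (n+1) * S⁻¹ * (p (n+1) l * downRate ν l m) := by
        rw [mul_right_comm, Finset.mul_sum]
        refine Finset.sum_congr rfl fun l hl => ?_
        calc Gfb lam f ζ ν p n * S⁻¹ * A *
              (p (n+1) l * (lam / layerMuOf ν p (n+1)) * (downRate ν l m / A))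
            = Gfb lam f ζ ν p n * (lam / layerMuOf ν p (n+1)) * S⁻¹ *
              (p (n+1) l * (downRate ν l m / A * A)) := by ring
          _ = Gfb lam f ζ ν p (n+1) * S⁻¹ * (p (n+1) l * downRate ν l m) := by
              rw [div_mul_cancel₀ _ hAne, c2]
      linear_combination hS1 + hS2
  · -- full state equation
    dsimp only
    rw [wt_full, hpfull, mul_one]
    have hsum1 : (∑ l ∈ layer N (N-1),
        Gfb lam f ζ ν p (wt l) * S⁻¹ * p (wt l) l * lam)
        = Gfb lam f ζ ν p (N-1) * S⁻¹ * lam := by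
      have hterm : ∀ l ∈ layer N (N-1),
          Gfb lam f ζ ν p (wt l) * S⁻¹ * p (wt l) l * lam
            = (Gfb lam f ζ ν p (N-1) * S⁻¹ * lam) * p (N-1) l := fun l hl => by
        rw [mem_layer.mp hl]; ring
      rw [Finset.sum_congr rfl hterm, ← Finset.mul_sum, hnorm (N-1) (by omega), mul_one]
    rw [hsum1]
    have e1 := hrec N hN1
    rw [min_self, hmuN] at e1
    have e2 := hrecQ 1 le_rfl
    have : N + 1 - 1 = N := by omega
    rw [this] at e2
    linear_combination S⁻¹ * e1 - S⁻¹ * e2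
  · -- queue recursion
    intro c hc1 hc2
    dsimp only
    have hcoef : (if c = 1 then
        Gfb lam f ζ ν p (wt (fullState N)) * S⁻¹ * p (wt (fullState N)) (fullState N)
        else Gfb lam f ζ ν p (N + (c-1)) * S⁻¹) = Gfb lam f ζ ν p (N + c - 1) * S⁻¹ := by
      by_cases h : c = 1
      · rw [if_pos h, wt_full, hpfull, mul_one, h]
        norm_num
      · rw [if_neg h]
        congr 2
        omega
    rw [hcoef]
    show _ = _ + Gfb lam f ζ ν p (N + c + 1) * S⁻¹ * ∑ i : Fin N, ν i
    have e1 := hrecQ c hc1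
    have e2 := hrecQ (c+1) (by omega)
    have : N + (c+1) - 1 = N + c := by omega
    rw [this] at e2
    have : N + (c+1) = N + c + 1 := by omega
    rw [this] at e2
    linear_combination S⁻¹ * e1 - S⁻¹ * e2
  · -- last queue state
    dsimp only
    have hcoef : (if C = 1 then
        Gfb lam f ζ ν p (wt (fullState N)) * S⁻¹ * p (wt (fullState N)) (fullState N)
        else Gfb lam f ζ ν p (N + (C-1)) * S⁻¹) = Gfb lam f ζ ν p (N + C - 1) * S⁻¹ := by
      by_cases h : C = 1
      · rw [if_pos h, wt_full, hpfull, mul_one, h]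
        norm_num
      · rw [if_neg h]
        congr 2
        omega
    rw [hcoef]
    have e1 := hrecQ C hC
    linear_combination S⁻¹ * e1
  · -- normalization
    dsimp only
    have hfib : (∑ m : Fin N → Bool, Gfb lam f ζ ν p (wt m) * S⁻¹ * p (wt m) m)
        = ∑ n ∈ Finset.range (N+1), ∑ m ∈ layer N n,
            Gfb lam f ζ ν p (wt m) * S⁻¹ * p (wt m) m := by
      exact (Finset.sum_fiberwise_of_maps_to
        (fun m _ => Finset.mem_range.mpr (by have := wt_le m; omega)) _).symm
    rw [hfib]
    have hlayer : ∀ n ∈ Finset.range (N+1),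
        (∑ m ∈ layer N n, Gfb lam f ζ ν p (wt m) * S⁻¹ * p (wt m) m)
          = Gfb lam f ζ ν p n * S⁻¹ := by
      intro n hn
      rw [Finset.sum_congr rfl fun m hm => by rw [mem_layer.mp hm]]
      rw [← Finset.mul_sum, hnorm n (by simpa using Nat.lt_succ_iff.mp (Finset.mem_range.mp hn)),
        mul_one]
    rw [Finset.sum_congr rfl hlayer]
    have hqueue : (∑ c ∈ Finset.Icc 1 C, Gfb lam f ζ ν p (N + c) * S⁻¹)
        = ∑ n ∈ Finset.Icc (N+1) (N+C), Gfb lam f ζ ν p n * S⁻¹ := by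
      rw [← Finset.map_add_left_Icc, Finset.sum_map]
      rfl
    rw [hqueue]
    have hsplit : (∑ n ∈ Finset.range (N+1), Gfb lam f ζ ν p n * S⁻¹)
        + (∑ n ∈ Finset.Icc (N+1) (N+C), Gfb lam f ζ ν p n * S⁻¹)
        = ∑ n ∈ Finset.range (N+C+1), Gfb lam f ζ ν p n * S⁻¹ := by
      rw [Finset.range_eq_Ico]
      have : Finset.Icc (N+1) (N+C) = Finset.Ico (N+1) (N+C+1) := by
        rw [Finset.Ico_add_one_right_eq_Icc]
      rw [this]
      rw [Finset.range_eq_Ico (a := N+C+1)]; exact Finset.sum_Ico_consecutive (fun n => Gfb lam f ζ ν p n * S⁻¹) (by omega : 0 ≤ N+1) (by omega : N+1 ≤ N+C+1)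
    rw [hsplit]
    have hfinal : (∑ n ∈ Finset.range (N+C+1), Gfb lam f ζ ν p n * S⁻¹) = S * S⁻¹ := by
      rw [Finset.range_eq_Ico,
        ← Finset.sum_Ico_consecutive _ (by omega : 0 ≤ 1) (by omega : 1 ≤ N+C+1)]
      have h01 : Finset.Ico 0 1 = {0} := rfl
      rw [h01, Finset.sum_singleton, Gfb_zero hN1 hlamext, one_mul,
        Finset.Ico_add_one_right_eq_Icc, hS, ← Finset.sum_mul]
      ring
    rw [hfinal, mul_inv_cancel₀ hSpos.ne']
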